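/- With f constructed as follows: f' (x≥0) = ∫₀ˣ γ(t) dt where γ(t) = n+4 for t ∈ I_n = (n+4)⁻²[1−(n+4)⁻², 1] and γ = 0 otherwise, one has f'(x) ≤ x for all x ∈ [0,1]; in particular f'(1/(n+4)²) = Σ_{k≥n} 1/(k+4)³ ≤ 1/(2(n+3)²) < 1/(n+4)². -/

import Mathlib

open Filter Metric Set intervalIntegral
open scoped Topology Classical

noncomputable def sA (n : ℕ) : ℝ := (1 - 1 / ((n : ℝ) + 4) ^ 2) / ((n : ℝ) + 4) ^ 2
noncomputable def sB (n : ℕ) : ℝ := 1 / ((n : ℝ) + 4) ^ 2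

lemma sA_pos (n : ℕ) : 0 < sA n := by
  have h : (0:ℝ) ≤ (n:ℝ) := Nat.cast_nonneg n
  unfold sA
  have h4 : (0:ℝ) < ((n:ℝ)+4)^2 := by positivity
  apply div_pos _ h4
  rw [sub_pos, div_lt_one h4]; nlinarith

lemma sA_eq (n : ℕ) : sA n = (((n:ℝ)+4)^2 - 1) / ((n:ℝ)+4)^4 := by
  have h : (0:ℝ) ≤ (n:ℝ) := Nat.cast_nonneg n
  unfold sA
  have h2 : ((n:ℝ)+4)^2 ≠ 0 := by positivity
  rw [div_eq_div_iff (by positivity) (by positivity)]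
  field_simp

lemma sA_le_sB (n : ℕ) : sA n ≤ sB n := by
  have h : (0:ℝ) ≤ (n:ℝ) := Nat.cast_nonneg n
  rw [sA_eq]
  unfold sB
  rw [div_le_div_iff₀ (by positivity) (by positivity)]
  nlinarith

lemma sB_sub_sA (n : ℕ) : sB n - sA n = 1 / ((n : ℝ) + 4) ^ 4 := by
  have h : (0:ℝ) ≤ (n:ℝ) := Nat.cast_nonneg n
  have h4 : (0:ℝ) < (n:ℝ)+4 := by linarith
  unfold sA sB
  field_simp
  ring

lemma sB_succ_le_sA (n : ℕ) : sB (n+1) ≤ sA n := by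
  have h : (0:ℝ) ≤ (n:ℝ) := Nat.cast_nonneg n
  rw [sA_eq]
  unfold sB
  push_cast
  rw [div_le_div_iff₀ (by positivity) (by positivity)]
  nlinarith [sq_nonneg ((n:ℝ)+4), pow_pos (show (0:ℝ) < (n:ℝ)+4 by linarith) 3]

lemma sB_anti {n m : ℕ} (h : n ≤ m) : sB m ≤ sB n := by
  have hc : (n:ℝ) ≤ (m:ℝ) := Nat.cast_le.2 h
  have h0 : (0:ℝ) ≤ (n:ℝ) := Nat.cast_nonneg n
  unfold sB
  apply one_div_le_one_div_of_le (by positivity)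
  nlinarith

lemma stmt16_cube_bound (c : ℝ) (hc : 3 ≤ c) :
    1 / c ^ 3 ≤ 1 / (2 * (c - 1) ^ 2) - 1 / (2 * c ^ 2) := by
  have h1 : (0:ℝ) < c := by linarith
  have h2 : (0:ℝ) < c - 1 := by linarith
  rw [div_sub_div _ _ (by positivity) (by positivity), div_le_div_iff₀ (by positivity) (by positivity)]
  nlinarith [pow_pos h1 2, pow_pos h2 2, pow_pos h1 3]

lemma stmt16_sum_range_le (c : ℝ) (hc : 0 ≤ c) (K : ℕ) :
    ∑ k ∈ Finset.range K, 1 / (c + (k:ℝ) + 4) ^ 3 ≤ 1 / (2 * (c + 3) ^ 2) := by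
  have key : ∑ k ∈ Finset.range K, 1 / (c + (k:ℝ) + 4) ^ 3 ≤
      ∑ k ∈ Finset.range K,
        (1 / (2 * (c + (k:ℝ) + 3) ^ 2) - 1 / (2 * (c + ((k:ℝ)+1) + 3) ^ 2)) := by
    apply Finset.sum_le_sum
    intro k _
    have hk : (0:ℝ) ≤ (k:ℝ) := Nat.cast_nonneg k
    have := stmt16_cube_bound (c + (k:ℝ) + 4) (by linarith)
    have e1 : c + (k:ℝ) + 4 - 1 = c + (k:ℝ) + 3 := by ring
    rw [e1] at this
    convert this using 3
    · rfl
    · ring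
  refine key.trans ?_
  have := Finset.sum_range_sub' (f := fun k : ℕ => 1 / (2 * (c + (k:ℝ) + 3) ^ 2)) K
  rw [show ∑ k ∈ Finset.range K,
        (1 / (2 * (c + (k:ℝ) + 3) ^ 2) - 1 / (2 * (c + ((k:ℝ)+1) + 3) ^ 2))
      = ∑ k ∈ Finset.range K, ((fun k : ℕ => 1 / (2 * (c + (k:ℝ) + 3) ^ 2)) k
        - (fun k : ℕ => 1 / (2 * (c + (k:ℝ) + 3) ^ 2)) (k+1)) from ?_, this]
  · have hK : (0:ℝ) ≤ (K:ℝ) := Nat.cast_nonneg K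
    have : (0:ℝ) ≤ 1 / (2 * (c + (K:ℝ) + 3) ^ 2) := by positivity
    simp only [Nat.cast_zero, add_zero]
    linarith [this]
  · apply Finset.sum_congr rfl
    intro k _
    push_cast
    ring_nf

lemma stmt16_term_nonneg (c : ℝ) (hc : 0 ≤ c) (k : ℕ) : (0:ℝ) ≤ 1 / (c + (k:ℝ) + 4) ^ 3 := by
  have hk : (0:ℝ) ≤ (k:ℝ) := Nat.cast_nonneg k
  positivity

lemma stmt16_summable (c : ℝ) (hc : 0 ≤ c) :
    Summable (fun k : ℕ => 1 / (c + (k:ℝ) + 4) ^ 3) :=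
  summable_of_sum_range_le (stmt16_term_nonneg c hc) (stmt16_sum_range_le c hc)

lemma stmt16_tsum_le (c : ℝ) (hc : 0 ≤ c) :
    (∑' k : ℕ, 1 / (c + (k:ℝ) + 4) ^ 3) ≤ 1 / (2 * (c + 3) ^ 2) :=
  Real.tsum_le_of_sum_range_le (stmt16_term_nonneg c hc) (stmt16_sum_range_le c hc)

lemma stmt16_vol (n : ℕ) (x : ℝ) :
    (MeasureTheory.volume.restrict (Set.Ioc (0:ℝ) x)) (Set.Icc (sA n) (sB n))
      = ENNReal.ofReal (min (sB n) x - sA n) := by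
  rw [MeasureTheory.Measure.restrict_apply measurableSet_Icc]
  have hset : Set.Icc (sA n) (sB n) ∩ Set.Ioc 0 x = Set.Icc (sA n) (min (sB n) x) := by
    ext t
    simp only [Set.mem_inter_iff, Set.mem_Icc, Set.mem_Ioc, le_min_iff]
    constructor
    · rintro ⟨⟨h1, h2⟩, _, h4⟩
      exact ⟨h1, h2, h4⟩
    · rintro ⟨h1, h2, h4⟩
      exact ⟨⟨h1, h2⟩, lt_of_lt_of_le (sA_pos n) h1, h4⟩
  rw [hset, Real.volume_Icc]

lemma stmt16_master
    (I : ℕ → Set ℝ)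
    (hI : ∀ n : ℕ, I n = Set.Icc ((1 - 1 / ((n : ℝ) + 4) ^ 2) / ((n : ℝ) + 4) ^ 2)
      (1 / ((n : ℝ) + 4) ^ 2))
    (γ : ℝ → ℝ)
    (hγ : ∀ t : ℝ, γ t = ∑' n : ℕ, if t ∈ I n then ((n : ℝ) + 4) else 0)
    (x : ℝ) (hx : 0 ≤ x) :
    (∫ t in (0 : ℝ)..x, γ t) = ∑' n : ℕ, ((n : ℝ) + 4) * max (min (sB n) x - sA n) 0 := by
  have hI' : ∀ n : ℕ, I n = Set.Icc (sA n) (sB n) := fun n => hI n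
  have hmeas : ∀ n : ℕ, MeasurableSet (I n) := fun n => (hI' n) ▸ measurableSet_Icc
  set F : ℕ → ℝ → ℝ := fun n => Set.indicator (I n) (fun _ => ((n : ℝ) + 4)) with hF
  have hγ' : γ = fun t => ∑' n : ℕ, F n t := by
    funext t
    rw [hγ t]
    refine tsum_congr fun n => ?_
    by_cases h : t ∈ I n <;> simp [hF, h]
  set μ := MeasureTheory.volume.restrict (Set.Ioc (0:ℝ) x) with hμ
  have hμI : ∀ n : ℕ, μ (I n) = ENNReal.ofReal (min (sB n) x - sA n) := by
    intro n; rw [hμ, hI' n]; exact stmt16_vol n x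
  have hint : ∀ n : ℕ, MeasureTheory.Integrable (F n) μ := by
    intro n
    apply MeasureTheory.Integrable.restrict
    rw [hF]
    rw [MeasureTheory.integrable_indicator_iff (hmeas n)]
    refine MeasureTheory.integrableOn_const ?_
    rw [hI' n, Real.volume_Icc]
    exact ENNReal.ofReal_ne_top
  have hval : ∀ n : ℕ, (∫ t, F n t ∂μ) = ((n : ℝ) + 4) * max (min (sB n) x - sA n) 0 := by
    intro n
    rw [hF]
    rw [MeasureTheory.integral_indicator_const _ (hmeas n), MeasureTheory.measureReal_def, hμI n, smul_eq_mul,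
      ENNReal.toReal_ofReal']
    ring
  have hnorm : ∀ n : ℕ, (∫ t, ‖F n t‖ ∂μ) = ((n : ℝ) + 4) * max (min (sB n) x - sA n) 0 := by
    intro n
    have he : (fun t => ‖F n t‖) = Set.indicator (I n) (fun _ => ((n : ℝ) + 4)) := by
      funext t
      rw [hF, norm_indicator_eq_indicator_norm]
      congr 1
      funext s
      exact Real.norm_of_nonneg (by positivity)
    rw [he, MeasureTheory.integral_indicator_const _ (hmeas n), MeasureTheory.measureReal_def, hμI n, smul_eq_mul,
      ENNReal.toReal_ofReal']
    ring
  have hterm_le : ∀ n : ℕ, ((n : ℝ) + 4) * max (min (sB n) x - sA n) 0 ≤ 1 / ((n:ℝ) + 4) ^ 3 := by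
    intro n
    have h0 : (0:ℝ) ≤ (n:ℝ) := Nat.cast_nonneg n
    have h1 : max (min (sB n) x - sA n) 0 ≤ 1 / ((n:ℝ) + 4) ^ 4 := by
      apply max_le
      · rw [← sB_sub_sA n]
        have : min (sB n) x ≤ sB n := min_le_left _ _
        linarith
      · positivity
    calc ((n : ℝ) + 4) * max (min (sB n) x - sA n) 0 ≤ ((n : ℝ) + 4) * (1 / ((n:ℝ) + 4) ^ 4) :=
          mul_le_mul_of_nonneg_left h1 (by positivity)
      _ = 1 / ((n:ℝ) + 4) ^ 3 := by field_simp
  have hterm_nonneg : ∀ n : ℕ, (0:ℝ) ≤ ((n : ℝ) + 4) * max (min (sB n) x - sA n) 0 := by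
    intro n
    have h0 : (0:ℝ) ≤ (n:ℝ) := Nat.cast_nonneg n
    have := le_max_right (min (sB n) x - sA n) 0
    positivity
  have hsummable : Summable (fun n : ℕ => ((n : ℝ) + 4) * max (min (sB n) x - sA n) 0) := by
    apply Summable.of_nonneg_of_le hterm_nonneg hterm_le
    have := stmt16_summable 0 le_rfl
    simpa using this
  have hsum : Summable fun n : ℕ => ∫ t, ‖F n t‖ ∂μ := by
    rw [show (fun n : ℕ => ∫ t, ‖F n t‖ ∂μ)
        = fun n : ℕ => ((n : ℝ) + 4) * max (min (sB n) x - sA n) 0 from funext hnorm]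
    exact hsummable
  rw [intervalIntegral.integral_of_le hx, hγ']
  rw [← MeasureTheory.integral_tsum_of_summable_integral_norm hint hsum]
  exact tsum_congr hval

set_option maxHeartbeats 1000000 in
lemma stmt16_eval (N : ℕ) (x : ℝ) (hx1 : x ≤ sB N) (hx2 : sB (N + 1) ≤ x) :
    ∑' n : ℕ, ((n : ℝ) + 4) * max (min (sB n) x - sA n) 0
      = ((N : ℝ) + 4) * max (x - sA N) 0 + ∑' k : ℕ, 1 / (((N : ℝ) + 1) + (k : ℝ) + 4) ^ 3 := by
  classical
  have ht : ∀ n : ℕ, ((n : ℝ) + 4) * max (min (sB n) x - sA n) 0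
      = if n < N then 0 else if n = N then ((N : ℝ) + 4) * max (x - sA N) 0
        else 1 / ((n : ℝ) + 4) ^ 3 := by
    intro n
    rcases lt_trichotomy n N with h | h | h
    · rw [if_pos h]
      have hmin : min (sB n) x = x := min_eq_right (hx1.trans (sB_anti h.le))
      have hle : x ≤ sA n := hx1.trans ((sB_anti h).trans (sB_succ_le_sA n))
      rw [hmin, max_eq_right (by linarith)]
      ring
    · rw [if_neg (by omega), if_pos h, h, min_eq_right hx1]
    · rw [if_neg (by omega), if_neg (by omega)]
      have hmin : min (sB n) x = sB n := min_eq_left ((sB_anti h).trans hx2)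
      rw [hmin, sB_sub_sA, max_eq_left (by positivity)]
      have h0 : (0:ℝ) < (n:ℝ) + 4 := by positivity
      field_simp
  rw [tsum_congr ht]
  have hmaxnn : (0:ℝ) ≤ max (x - sA N) 0 := le_max_right _ _
  have hNval : ((N : ℝ) + 4) * max (x - sA N) 0 ≤ 1 / ((N : ℝ) + 4) ^ 3 := by
    have h1 : max (x - sA N) 0 ≤ 1 / ((N:ℝ) + 4) ^ 4 := by
      apply max_le _ (by positivity)
      rw [← sB_sub_sA N]
      linarith
    calc ((N : ℝ) + 4) * max (x - sA N) 0 ≤ ((N : ℝ) + 4) * (1 / ((N:ℝ) + 4) ^ 4) :=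
          mul_le_mul_of_nonneg_left h1 (by positivity)
      _ = 1 / ((N:ℝ) + 4) ^ 3 := by
          have h0 : (0:ℝ) < (N:ℝ) + 4 := by positivity
          field_simp
  have hs : Summable (fun n : ℕ => if n < N then (0:ℝ) else if n = N then
      ((N : ℝ) + 4) * max (x - sA N) 0 else 1 / ((n : ℝ) + 4) ^ 3) := by
    refine Summable.of_nonneg_of_le ?_ ?_ (show Summable (fun n : ℕ => 1 / ((n : ℝ) + 4) ^ 3) by
      simpa using stmt16_summable 0 le_rfl)
    · intro n
      split_ifs with h1 h2
      · exact le_refl 0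
      · exact mul_nonneg (by positivity) hmaxnn
      · positivity
    · intro n
      split_ifs with h1 h2
      · positivity
      · subst h2; exact hNval
      · exact le_rfl
  rw [← Summable.sum_add_tsum_nat_add (N + 1) hs]
  congr 1
  · rw [Finset.sum_eq_single_of_mem N (Finset.self_mem_range_succ N)]
    · rw [if_neg (by omega), if_pos rfl]
    · intro i hmem hiN
      rw [if_pos (by have := Finset.mem_range.1 hmem; omega)]
  · apply tsum_congr
    intro k
    rw [if_neg (by omega), if_neg (by omega)]
    push_cast
    ring_nf

theorem stmt16
    (I : ℕ → Set ℝ)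
    (hI : ∀ n : ℕ, I n = Set.Icc ((1 - 1 / ((n : ℝ) + 4) ^ 2) / ((n : ℝ) + 4) ^ 2)
      (1 / ((n : ℝ) + 4) ^ 2))
    (γ : ℝ → ℝ)
    (hγ : ∀ t : ℝ, γ t = ∑' n : ℕ, if t ∈ I n then ((n : ℝ) + 4) else 0) :
    (∀ x ∈ Set.Icc (0 : ℝ) 1, (∫ t in (0 : ℝ)..x, γ t) ≤ x) ∧
    (∀ n : ℕ, (∫ t in (0 : ℝ)..(1 / ((n : ℝ) + 4) ^ 2), γ t) =
      ∑' k : ℕ, 1 / ((n : ℝ) + (k : ℝ) + 4) ^ 3) ∧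
    (∀ n : ℕ, (∑' k : ℕ, 1 / ((n : ℝ) + (k : ℝ) + 4) ^ 3) ≤ 1 / (2 * ((n : ℝ) + 3) ^ 2)) ∧
    (∀ n : ℕ, 1 / (2 * ((n : ℝ) + 3) ^ 2) < 1 / ((n : ℝ) + 4) ^ 2) := by
  refine ⟨?_, ?_, ?_, ?_⟩
  · -- part 1
    rintro x ⟨hx0, hx1⟩
    rcases eq_or_lt_of_le hx0 with h | h
    · rw [← h, intervalIntegral.integral_same]
    rw [stmt16_master I hI γ hγ x hx0]
    by_cases hb : sB 0 < x
    · have hcong : ∀ n : ℕ, ((n : ℝ) + 4) * max (min (sB n) x - sA n) 0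
          = 1 / ((0:ℝ) + (n : ℝ) + 4) ^ 3 := by
        intro n
        have hmin : min (sB n) x = sB n := min_eq_left ((sB_anti (Nat.zero_le n)).trans hb.le)
        rw [hmin, sB_sub_sA, max_eq_left (by positivity)]
        have h0 : (0:ℝ) < (n:ℝ) + 4 := by positivity
        field_simp
        ring
      rw [tsum_congr hcong]
      have hle := stmt16_tsum_le 0 le_rfl
      have hb0 : sB 0 = 1 / 16 := by unfold sB; norm_num
      rw [hb0] at hb
      norm_num at hle ⊢
      linarith
    · push_neg at hb
      have hex : ∃ n : ℕ, sB (n + 1) < x := by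
        obtain ⟨n, hn⟩ := exists_nat_gt (1 / x)
        refine ⟨n, ?_⟩
        have hxpos : (0:ℝ) < 1 / x := by positivity
        have hnpos : (0:ℝ) < (n:ℝ) := lt_trans hxpos hn
        have h1 : 1 / (n:ℝ) < x := by
          rw [div_lt_iff₀ hnpos]
          have := (div_lt_iff₀ h).1 hn
          linarith [mul_comm x (n:ℝ)]
        have h2 : sB (n + 1) ≤ 1 / (n:ℝ) := by
          unfold sB
          apply one_div_le_one_div_of_le hnpos
          push_cast
          nlinarith
        linarith
      set N := Nat.find hex with hN
      have hspec : sB (N + 1) < x := Nat.find_spec hex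
      have hxN : x ≤ sB N := by
        by_contra hc
        push_neg at hc
        have hN0 : N ≠ 0 := by
          intro h0
          rw [h0] at hc
          exact absurd hb (not_le.2 hc)
        have hmin := Nat.find_min hex (show N - 1 < N from Nat.pred_lt hN0)
        have heq : N - 1 + 1 = N := by omega
        rw [heq] at hmin
        exact hmin hc
      rw [stmt16_eval N x hxN hspec.le]
      have htail : (∑' k : ℕ, 1 / (((N : ℝ) + 1) + (k : ℝ) + 4) ^ 3)
          ≤ 1 / (2 * ((N:ℝ) + 4) ^ 2) := by
        have := stmt16_tsum_le ((N:ℝ) + 1) (by positivity)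
        have he : (N:ℝ) + 1 + 3 = (N:ℝ) + 4 := by ring
        rwa [he] at this
      set m : ℝ := (N:ℝ) + 4 with hm
      have hm4 : (4:ℝ) ≤ m := by rw [hm]; have : (0:ℝ) ≤ (N:ℝ) := Nat.cast_nonneg N; linarith
      have hmpos : (0:ℝ) < m := by linarith
      have hxu : x ≤ 1 / m ^ 2 := by rw [hm]; exact hxN
      have hxl : 1 / (m + 1) ^ 2 < x := by
        have : sB (N + 1) = 1 / (m + 1) ^ 2 := by
          unfold sB; rw [hm]; push_cast; ring_nf
        linarith [this ▸ hspec]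
      rcases le_total (x - sA N) 0 with hc | hc
      · rw [max_eq_right hc]
        have h12 : 1 / (2 * m ^ 2) ≤ 1 / (m + 1) ^ 2 := by
          rw [div_le_div_iff₀ (by positivity) (by positivity)]
          nlinarith
        linarith
      · rw [max_eq_left hc]
        have hsa : sA N = (m ^ 2 - 1) / m ^ 4 := by rw [sA_eq, hm]
        have key : m * (x - sA N) + 1 / (2 * m ^ 2) - x
            = (m - 1) * (x - 1 / m ^ 2) + (2 - m) / (2 * m ^ 3) := by
          rw [hsa]
          field_simp
          ring
        have h1 : (m - 1) * (x - 1 / m ^ 2) ≤ 0 :=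
          mul_nonpos_of_nonneg_of_nonpos (by linarith) (by linarith)
        have h2 : (2 - m) / (2 * m ^ 3) ≤ 0 :=
          div_nonpos_of_nonpos_of_nonneg (by linarith) (by positivity)
        have : m * (x - sA N) + 1 / (2 * m ^ 2) - x ≤ 0 := by rw [key]; linarith
        linarith
  · -- part 2
    intro N
    have hbN : (1 : ℝ) / ((N : ℝ) + 4) ^ 2 = sB N := rfl
    have hbpos : (0:ℝ) ≤ sB N := by unfold sB; positivity
    rw [hbN, stmt16_master I hI γ hγ (sB N) hbpos,
      stmt16_eval N (sB N) le_rfl (sB_anti (Nat.le_succ N))]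
    have hmax : max (sB N - sA N) 0 = 1 / ((N:ℝ) + 4) ^ 4 := by
      rw [sB_sub_sA, max_eq_left (by positivity)]
    rw [hmax]
    have hsum := stmt16_summable (N:ℝ) (Nat.cast_nonneg N)
    rw [Summable.tsum_eq_zero_add hsum]
    have h0 : (0:ℝ) < (N:ℝ) + 4 := by positivity
    have hfirst : ((N : ℝ) + 4) * (1 / ((N:ℝ) + 4) ^ 4) = 1 / ((N:ℝ) + ((0:ℕ):ℝ) + 4) ^ 3 := by
      push_cast
      field_simp
      ring
    rw [hfirst]
    congr 1
    apply tsum_congr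
    intro k
    push_cast
    ring_nf
  · -- part 3
    intro n
    exact stmt16_tsum_le (n:ℝ) (Nat.cast_nonneg n)
  · -- part 4
    intro n
    have h0 : (0:ℝ) ≤ (n:ℝ) := Nat.cast_nonneg n
    rw [div_lt_div_iff₀ (by positivity) (by positivity)]
    nlinarith
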